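/- Conversely, if lim_{v→∞} E[F_Y(Y) | X > v] = 1 and F_Y(λ) < 1 for some λ, then lim_{v→∞} P(Y > λ | X > v) = 1 for every such λ. -/

import Mathlib

open MeasureTheory Filter

/-- Conversely, if `E[F_Y(Y) | X > v] → 1` as `v → ∞`, then for every `λ` with
`F_Y(λ) < 1` we have `P(Y > λ | X > v) → 1` as `v → ∞`. -/
theorem cond_prob_tendsto_one {Ω : Type*} [MeasurableSpace Ω]
    (μ : Measure Ω) [IsProbabilityMeasure μ]
    (X Y : Ω → ℝ) (hX : Measurable X) (hY : Measurable Y)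
    (F : ℝ → ℝ) (hF : ∀ y, F y = (μ {ω | Y ω ≤ y}).toReal)
    (hpos : ∀ v : ℝ, 0 < μ {ω | v < X ω})
    (hcondE : Tendsto
      (fun v => (∫ ω in {ω | v < X ω}, F (Y ω) ∂μ) / (μ {ω | v < X ω}).toReal)
      atTop (nhds 1)) :
    ∀ lam : ℝ, F lam < 1 → Tendsto
      (fun v => (μ ({ω | lam < Y ω} ∩ {ω | v < X ω})).toReal / (μ {ω | v < X ω}).toReal)
      atTop (nhds 1) := by
  intro lam hlam
  have hFmono : Monotone F := by
    intro a b hab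
    rw [hF a, hF b]
    exact ENNReal.toReal_mono (measure_ne_top μ _)
      (measure_mono (fun ω h => le_trans h hab))
  have hFmeas : Measurable F := hFmono.measurable
  have hF0 : ∀ y, 0 ≤ F y := fun y => (hF y) ▸ ENNReal.toReal_nonneg
  have hF1 : ∀ y, F y ≤ 1 := by
    intro y
    rw [hF y]
    have := ENNReal.toReal_mono ENNReal.one_ne_top (prob_le_one (μ := μ) (s := {ω | Y ω ≤ y}))
    simpa using this
  set ε : ℝ := 1 - F lam with hεdef
  have hεpos : 0 < ε := by simp only [hεdef]; linarith
  have hint : Integrable (fun ω => F (Y ω)) μ := by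
    apply Integrable.mono' (integrable_const (1:ℝ)) ((hFmeas.comp hY).aestronglyMeasurable)
    filter_upwards with ω
    show ‖F (Y ω)‖ ≤ 1
    rw [Real.norm_eq_abs, abs_of_nonneg (hF0 _)]
    exact hF1 _
  have hB : MeasurableSet {ω | lam < Y ω} := hY measurableSet_Ioi
  have key : ∀ v : ℝ,
      1 - (1 - (∫ ω in {ω | v < X ω}, F (Y ω) ∂μ) / (μ {ω | v < X ω}).toReal) / ε
        ≤ (μ ({ω | lam < Y ω} ∩ {ω | v < X ω})).toReal / (μ {ω | v < X ω}).toReal := by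
    intro v
    set A : Set Ω := {ω | v < X ω} with hAdef
    have hA : MeasurableSet A := hX measurableSet_Ioi
    set B : Set Ω := {ω | lam < Y ω} with hBdef
    set m : ℝ := (μ A).toReal with hmdef
    set b : ℝ := (μ (B ∩ A)).toReal with hbdef
    set I : ℝ := ∫ ω in A, F (Y ω) ∂μ with hIdef
    have hm : 0 < m := ENNReal.toReal_pos (hpos v).ne' (measure_ne_top μ _)
    have hble : b ≤ m :=
      ENNReal.toReal_mono (measure_ne_top μ _) (measure_mono Set.inter_subset_right)
    have hbnn : 0 ≤ b := ENNReal.toReal_nonneg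
    -- split A into A ∩ B and A \ B
    have hsplit : (μ (A ∩ B)).toReal + (μ (A \ B)).toReal = m := by
      rw [← ENNReal.toReal_add (measure_ne_top μ _) (measure_ne_top μ _),
        measure_inter_add_diff A hB]
    have hab : (μ (A ∩ B)).toReal = b := by rw [hbdef, Set.inter_comm]
    have hIbound : I ≤ F lam * (m - b) + b := by
      have hunion : A ∩ B ∪ A \ B = A := Set.inter_union_diff A B
      have hdisj : Disjoint (A ∩ B) (A \ B) :=
        Disjoint.mono_left Set.inter_subset_right Set.disjoint_sdiff_right
      have hI1 : ∫ ω in A ∩ B, F (Y ω) ∂μ ≤ (μ (A ∩ B)).toReal := by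
        have := setIntegral_mono_on hint.integrableOn
          (integrableOn_const (measure_ne_top μ _))
          (hA.inter hB) (fun ω _ => hF1 (Y ω))
        simpa [measureReal_def] using this
      have hI2 : ∫ ω in A \ B, F (Y ω) ∂μ ≤ F lam * (μ (A \ B)).toReal := by
        have := setIntegral_mono_on hint.integrableOn
          (integrableOn_const (measure_ne_top μ _))
          (hA.diff hB) (fun ω hω => hFmono (not_lt.1 hω.2))
        simpa [mul_comm, measureReal_def] using this
      have hIsum := setIntegral_union (μ := μ) (f := fun ω => F (Y ω)) hdisj (hA.diff hB)
        hint.integrableOn hint.integrableOn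
      rw [hunion] at hIsum
      rw [hIdef, hIsum]
      have hmb : (μ (A \ B)).toReal = m - b := by
        have := hsplit; rw [hab] at this; linarith
      rw [hab] at hI1
      rw [hmb] at hI2
      linarith
    -- algebra
    have step : ε * (1 - b / m) ≤ 1 - I / m := by
      have h2 : ε * (1 - b / m) = (ε * (m - b)) / m := by field_simp
      have h3 : 1 - I / m = (m - I) / m := by field_simp
      rw [h2, h3]
      gcongr
      nlinarith [hIbound]
    have h4 : 1 - b / m ≤ (1 - I / m) / ε := by
      rw [le_div_iff₀ hεpos]
      nlinarith [step]
    linarith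
  have hup : ∀ v : ℝ,
      (μ ({ω | lam < Y ω} ∩ {ω | v < X ω})).toReal / (μ {ω | v < X ω}).toReal ≤ 1 := by
    intro v
    apply div_le_one_of_le₀
    · exact ENNReal.toReal_mono (measure_ne_top μ _) (measure_mono Set.inter_subset_right)
    · exact ENNReal.toReal_nonneg
  have hlow : Tendsto
      (fun v => 1 - (1 - (∫ ω in {ω | v < X ω}, F (Y ω) ∂μ) / (μ {ω | v < X ω}).toReal) / ε)
      atTop (nhds 1) := by
    have h0 : Tendsto
        (fun v => (1 - (∫ ω in {ω | v < X ω}, F (Y ω) ∂μ) / (μ {ω | v < X ω}).toReal) / ε)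
        atTop (nhds 0) := by
      have := (tendsto_const_nhds (x := (1:ℝ)) (f := atTop)).sub hcondE
      simpa using this.div_const ε
    have := (tendsto_const_nhds (x := (1:ℝ)) (f := atTop)).sub h0
    simpa using this
  exact tendsto_of_tendsto_of_tendsto_of_le_of_le hlow tendsto_const_nhds key hup
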